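/- arXiv:1203.2396 — 2 statements merged into one kernel-verified Lean document; each statement's English description precedes it below -/
import Mathlib

section
/- If F : [0,∞) → ℝ is C², F(0) > 0, F'(0) > 0, F''(t) ≥ C·F(t)^γ for all t ≥ 0 (C > 0, γ > 1), and additionally F'(0)² ≥ (2C/(γ+1))·F(0)^{γ+1}, then F'(t)² ≥ (2C/(γ+1))·F(t)^{γ+1} for all t ≥ 0. -/
theorem stmt1 (C γ : ℝ) (hC : 0 < C) (hγ : 1 < γ)
    (F F' F'' : ℝ → ℝ)
    (hd1 : ∀ t, 0 ≤ t → HasDerivAt F (F' t) t)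
    (hd2 : ∀ t, 0 ≤ t → HasDerivAt F' (F'' t) t)
    (hcont : ContinuousOn F'' (Set.Ici 0))
    (hF0 : 0 < F 0) (hF'0 : 0 < F' 0)
    (hineq : ∀ t, 0 ≤ t → C * F t ^ γ ≤ F'' t)
    (hinit : (2 * C / (γ + 1)) * F 0 ^ (γ + 1) ≤ (F' 0) ^ 2) :
    ∀ t, 0 ≤ t → (2 * C / (γ + 1)) * F t ^ (γ + 1) ≤ (F' t) ^ 2 := by
  have hcF : ContinuousOn F (Set.Ici 0) := fun t ht =>
    ((hd1 t ht).continuousAt).continuousWithinAt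
  have hcF' : ContinuousOn F' (Set.Ici 0) := fun t ht =>
    ((hd2 t ht).continuousAt).continuousWithinAt
  -- positivity of F and F' on [0,∞)
  have hpos : ∀ t, 0 ≤ t → 0 < F t ∧ 0 < F' t := by
    by_contra hbad
    push_neg at hbad
    obtain ⟨t0, ht0, hbad0⟩ := hbad
    set S : Set ℝ := {t | 0 ≤ t ∧ (F t ≤ 0 ∨ F' t ≤ 0)} with hS
    have hSne : S.Nonempty := by
      refine ⟨t0, ht0, ?_⟩
      rcases le_or_gt (F t0) 0 with h | h
      · exact Or.inl h
      · exact Or.inr (hbad0 h)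
    have hSclosed : IsClosed S := by
      have : S = (Set.Ici (0:ℝ) ∩ F ⁻¹' Set.Iic 0) ∪
          (Set.Ici (0:ℝ) ∩ F' ⁻¹' Set.Iic 0) := by
        ext x
        simp only [hS, Set.mem_setOf_eq, Set.mem_union, Set.mem_inter_iff,
          Set.mem_Ici, Set.mem_preimage, Set.mem_Iic, and_or_left]
      rw [this]
      exact (hcF.preimage_isClosed_of_isClosed isClosed_Ici isClosed_Iic).union
        (hcF'.preimage_isClosed_of_isClosed isClosed_Ici isClosed_Iic)
    have hSbdd : BddBelow S := ⟨0, fun x hx => hx.1⟩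
    set T := sInf S with hT
    have hTS : T ∈ S := hSclosed.csInf_mem hSne hSbdd
    have hT0 : 0 ≤ T := hTS.1
    have hTpos : 0 < T := by
      rcases hT0.lt_or_eq with h | h
      · exact h
      · exfalso
        rcases hTS.2 with h1 | h1
        · rw [← h] at h1; linarith
        · rw [← h] at h1; linarith
    have hgood : ∀ s, 0 ≤ s → s < T → 0 < F s ∧ 0 < F' s := by
      intro s hs hsT
      by_contra h
      push_neg at h
      have : s ∈ S := by
        refine ⟨hs, ?_⟩
        rcases le_or_gt (F s) 0 with h1 | h1
        · exact Or.inl h1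
        · exact Or.inr (h h1)
      exact absurd (csInf_le hSbdd this) (not_le.mpr hsT)
    have hsub : Set.Icc (0:ℝ) T ⊆ Set.Ici 0 := fun x hx => hx.1
    -- F strictly increasing on [0,T]
    have hFmono : StrictMonoOn F (Set.Icc 0 T) := by
      apply strictMonoOn_of_deriv_pos (convex_Icc 0 T) (hcF.mono hsub)
      intro x hx
      rw [interior_Icc] at hx
      rw [(hd1 x hx.1.le).deriv]
      exact (hgood x hx.1.le hx.2).2
    have hF'mono : StrictMonoOn F' (Set.Icc 0 T) := by
      apply strictMonoOn_of_deriv_pos (convex_Icc 0 T) (hcF'.mono hsub)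
      intro x hx
      rw [interior_Icc] at hx
      rw [(hd2 x hx.1.le).deriv]
      have hFx : 0 < F x := (hgood x hx.1.le hx.2).1
      have := hineq x hx.1.le
      have hpow : 0 < F x ^ γ := Real.rpow_pos_of_pos hFx γ
      nlinarith
    have h1 : F 0 < F T := hFmono (Set.left_mem_Icc.mpr hT0) (Set.right_mem_Icc.mpr hT0) hTpos
    have h2 : F' 0 < F' T := hF'mono (Set.left_mem_Icc.mpr hT0) (Set.right_mem_Icc.mpr hT0) hTpos
    rcases hTS.2 with h | h <;> linarith
  -- energy function
  set E : ℝ → ℝ := fun t => (F' t) ^ 2 - (2 * C / (γ + 1)) * F t ^ (γ + 1) with hE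
  have hγ1 : (0:ℝ) < γ + 1 := by linarith
  have hEderiv : ∀ t, 0 ≤ t →
      HasDerivAt E (2 * F' t * F'' t - (2 * C / (γ + 1)) * ((γ + 1) * F t ^ γ * F' t)) t := by
    intro t ht
    have h1 : HasDerivAt (fun s => (F' s) ^ 2) (2 * F' t * F'' t) t := by
      have := (hd2 t ht).pow 2
      exact this.congr_deriv (by push_cast; ring)
    have h2 : HasDerivAt (fun s => F s ^ (γ + 1)) ((γ + 1) * F t ^ γ * F' t) t := by
      have hr := (Real.hasDerivAt_rpow_const (x := F t) (p := γ + 1)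
        (Or.inr (by linarith))).comp t (hd1 t ht)
      have : γ + 1 - 1 = γ := by ring
      rw [this] at hr; exact hr
    exact h1.sub (h2.const_mul (2 * C / (γ + 1)))
  have hEmono : MonotoneOn E (Set.Ici 0) := by
    apply monotoneOn_of_deriv_nonneg (convex_Ici 0)
    · intro t ht
      exact ((hEderiv t ht).continuousAt).continuousWithinAt
    · intro t ht
      rw [interior_Ici] at ht
      exact ((hEderiv t ht.le).differentiableAt).differentiableWithinAt
    · intro t ht
      rw [interior_Ici] at ht
      rw [(hEderiv t ht.le).deriv]
      have hF' : 0 < F' t := (hpos t ht.le).2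
      have hFF : C * F t ^ γ ≤ F'' t := hineq t ht.le
      have hcc : 2 * C / (γ + 1) * (γ + 1) = 2 * C := by field_simp
      have : 2 * C / (γ + 1) * ((γ + 1) * F t ^ γ * F' t) = 2 * C * F t ^ γ * F' t := by
        rw [← mul_assoc, ← mul_assoc, hcc]
      rw [this]
      nlinarith
  intro t ht
  have hmono := hEmono (Set.mem_Ici.mpr (le_refl 0)) (Set.mem_Ici.mpr ht) ht
  simp only [hE] at hmono
  linarith
end

section
/- Define K₀'(r) = −∫₀^∞ e^{-r·cosh t}·cosh t dt for r > 0 (the derivative of K₀). Then |K₀'(r)| ≤ 2 + 1/(2r²) for all r > 0. -/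
open MeasureTheory Real Filter Set

theorem stmt9 (r : ℝ) (hr : 0 < r) :
    |-(∫ t in Set.Ioi (0:ℝ), Real.exp (-r * Real.cosh t) * Real.cosh t)|
      ≤ 2 + 1 / (2 * r ^ 2) := by
  set I := ∫ t in Set.Ioi (0:ℝ), Real.exp (-r * Real.cosh t) * Real.cosh t with hI
  have hInonneg : 0 ≤ I := by
    apply setIntegral_nonneg measurableSet_Ioi
    intro t _
    positivity
  -- the comparison function g' t = cosh t * exp (-r * sinh t), antiderivative g
  set g : ℝ → ℝ := fun t => -Real.exp (-r * Real.sinh t) / r with hg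
  set g' : ℝ → ℝ := fun t => Real.cosh t * Real.exp (-r * Real.sinh t) with hg'
  have hderiv : ∀ x ∈ Set.Ici (0:ℝ), HasDerivAt g (g' x) x := by
    intro x _
    have h1 : HasDerivAt (fun t : ℝ => -r * Real.sinh t) (-r * Real.cosh x) x :=
      (Real.hasDerivAt_sinh x).const_mul (-r)
    have h2 : HasDerivAt (fun t : ℝ => Real.exp (-r * Real.sinh t))
        (Real.exp (-r * Real.sinh x) * (-r * Real.cosh x)) x := (Real.hasDerivAt_exp _).comp x h1
    have h3 : HasDerivAt g _ x := (h2.neg).div_const r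
    convert h3 using 1
    show Real.cosh x * Real.exp (-r * Real.sinh x) = _
    field_simp
  have hsinh_top : Tendsto Real.sinh atTop atTop := by
    apply tendsto_atTop_mono' _ _ tendsto_id
    filter_upwards [eventually_ge_atTop (0:ℝ)] with x hx
    exact Real.self_le_sinh_iff.mpr hx
  have htends : Tendsto g atTop (nhds 0) := by
    have : Tendsto (fun t : ℝ => Real.exp (-r * Real.sinh t)) atTop (nhds 0) := by
      apply Real.tendsto_exp_atBot.comp
      have h1 : Tendsto (fun t : ℝ => r * Real.sinh t) atTop atTop :=
        hsinh_top.const_mul_atTop hr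
      have h2 := tendsto_neg_atTop_atBot.comp h1
      exact h2.congr (fun x => by simp [Function.comp])
    have := (this.neg).div_const r
    simpa [hg] using this
  have hkey : ∫ t in Set.Ioi (0:ℝ), g' t = 1 / r := by
    rw [MeasureTheory.integral_Ioi_of_hasDerivAt_of_nonneg' hderiv
      (fun x _ => by positivity) htends]
    simp [hg, Real.sinh_zero, neg_div, one_div]
  have hgint : IntegrableOn g' (Set.Ioi (0:ℝ)) :=
    MeasureTheory.integrableOn_Ioi_deriv_of_nonneg' hderiv (fun x _ => by positivity) htends
  have hmono : I ≤ 1 / r := by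
    rw [← hkey]
    apply integral_mono_of_nonneg
    · filter_upwards with t; positivity
    · exact hgint
    · filter_upwards with t
      have hsc : Real.sinh t ≤ Real.cosh t := by
        rw [Real.sinh_eq, Real.cosh_eq]
        have := Real.exp_pos (-t)
        linarith
      have : Real.exp (-r * Real.cosh t) ≤ Real.exp (-r * Real.sinh t) :=
        Real.exp_le_exp.mpr (by nlinarith)
      calc Real.exp (-r * Real.cosh t) * Real.cosh t
          ≤ Real.exp (-r * Real.sinh t) * Real.cosh t := by
            have := Real.cosh_pos (x := t); nlinarith
        _ = g' t := by rw [hg']; ring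
  rw [abs_neg, abs_of_nonneg hInonneg]
  have h2 : 1 / r ≤ 2 + 1 / (2 * r ^ 2) := by
    have h3 : (0:ℝ) ≤ 4*r^2 - 2*r + 1 := by nlinarith [sq_nonneg (2*r-1)]
    have h4 : 2 + 1/(2*r^2) - 1/r = (4*r^2 - 2*r + 1)/(2*r^2) := by field_simp; ring
    have h5 := div_nonneg h3 (by positivity : (0:ℝ) ≤ 2*r^2)
    linarith
  linarith
end
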